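/- If P = ⟨A | R⟩ is a finite presentation and ρ is an integer greater than half the length of the longest relator in R, then the natural homomorphism Γ(B_ρ(P)) → |P| given by p_b ↦ b is an isomorphism. -/

import Mathlib

/-- The identity partial permutation of `X`, represented as a graph (a set of pairs). -/
def pid (X : Type*) : Set (X × X) := {xy | xy.1 = xy.2}

/-- The composition `p·q` of two partial permutations (graphs): first apply `q`, then `p`. -/
def pcomp {X : Type*} (p q : Set (X × X)) : Set (X × X) :=
  {xz | ∃ y, (xz.1, y) ∈ q ∧ (y, xz.2) ∈ p}

/-- The domain of a partial permutation represented as a graph. -/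
def pdom {X : Type*} (p : Set (X × X)) : Set X := {x | ∃ y, (x, y) ∈ p}

/-- The range of a partial permutation represented as a graph. -/
def pran {X : Type*} (p : Set (X × X)) : Set X := {y | ∃ x, (x, y) ∈ p}

/-- The inverse of a partial permutation represented as a graph. -/
def pinv {X : Type*} (p : Set (X × X)) : Set (X × X) := {xy | (xy.2, xy.1) ∈ p}

/-- `p` is the graph of a partial permutation: a bijection between two subsets of `X`. -/
def IsPartialPerm {X : Type*} (p : Set (X × X)) : Prop :=
  (∀ x y y', (x, y) ∈ p → (x, y') ∈ p → y = y') ∧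
  (∀ x x' y, (x, y) ∈ p → (x', y) ∈ p → x = x')

/-- A permutoid on `X`: a set of partial permutations (with nonempty domains) of `X`,
containing the identity of `X`, such that any (defined, i.e. nonempty) partial composition
of two members has at most one extension in the set.  Here `q` extends `p` iff `p ⊆ q`
as graphs. -/
structure IsPermutoid {X : Type*} (S : Set (Set (X × X))) : Prop where
  partialPerm : ∀ p ∈ S, IsPartialPerm p
  nonempty : ∀ p ∈ S, p.Nonempty
  id_mem : pid X ∈ S
  unique_ext : ∀ p ∈ S, ∀ q ∈ S, ∀ r ∈ S, ∀ r' ∈ S,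
    (pcomp p q).Nonempty → pcomp p q ⊆ r → pcomp p q ⊆ r' → r = r'

/-- A morphism of permutoids `(φ, Φ) : (S; X) → (S'; X')`. -/
structure IsPermutoidHom {X X' : Type*} (S : Set (Set (X × X))) (S' : Set (Set (X' × X')))
    (φ : Set (X × X) → Set (X' × X')) (Φ : X → X') : Prop where
  maps : ∀ p ∈ S, φ p ∈ S'
  map_id : φ (pid X) = pid X'
  map_rel : ∀ p ∈ S, ∀ x y, (x, y) ∈ p → (Φ x, Φ y) ∈ φ p
  map_comp : ∀ p ∈ S, ∀ q ∈ S, ∀ r ∈ S, (pcomp p q).Nonempty → pcomp p q ⊆ r →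
    pcomp (φ p) (φ q) ⊆ φ r

/-- The permutoid is complete: all its elements are (graphs of) full permutations of `X`. -/
def IsCompletePermutoid {X : Type*} (S : Set (Set (X × X))) : Prop :=
  ∀ p ∈ S, pdom p = Set.univ ∧ pran p = Set.univ

/-- The relators of the universal group of a permutoid: `p q = r` whenever `r ∈ S` extends
the (defined) composition `p·q`. -/
def permutoidRels {X : Type*} (S : Set (Set (X × X))) : Set (FreeGroup ↥S) :=
  {w | ∃ p q r : ↥S, (pcomp p.1 q.1).Nonempty ∧ pcomp p.1 q.1 ⊆ r.1 ∧
    w = FreeGroup.of p * FreeGroup.of q * (FreeGroup.of r)⁻¹}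

/-- The universal group `Γ(S; X)` of a permutoid. -/
abbrev UniversalGroup {X : Type*} (S : Set (Set (X × X))) : Type _ :=
  PresentedGroup (permutoidRels S)

/-- A finite permutoid is developable if it admits a complete finite extension. -/
def Developable {X : Type*} (S : Set (Set (X × X))) : Prop :=
  ∃ (Y : Type) (S' : Set (Set (Y × Y))) (φ : Set (X × X) → Set (Y × Y)) (Φ : X → Y),
    Finite Y ∧ IsPermutoid S' ∧ IsPermutoidHom S S' φ Φ ∧ Function.Injective Φ ∧
    IsCompletePermutoid S'
/-- The ball of radius `r` about the identity in the word metric on `G` determined by a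
generating set `A`: elements expressible as products of at most `r` elements of `A ∪ A⁻¹`. -/
def wordBall {G : Type*} [Group G] (A : Set G) (r : ℕ) : Set G :=
  {g | ∃ l : List G, l.length ≤ r ∧ (∀ a ∈ l, a ∈ A ∨ a⁻¹ ∈ A) ∧ l.prod = g}

open scoped Classical in
/-- The element `p_b` of the Cameron permutoid: for `b = 1` it is the identity of
`B_{2ρ}`, and for `b ≠ 1` it is left multiplication by `b`, viewed as a partial
permutation `B_ρ → B_{2ρ}` of the set `B_{2ρ}` (represented as a graph). -/
noncomputable def camP {G : Type*} [Group G] (A : Set G) (ρ : ℕ) (b : G) :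
    Set (↥(wordBall A (2 * ρ)) × ↥(wordBall A (2 * ρ))) :=
  if b = 1 then pid ↥(wordBall A (2 * ρ))
  else {xy | (xy.1 : G) ∈ wordBall A ρ ∧ b * (xy.1 : G) = (xy.2 : G)}

/-- The Cameron permutoid `Π_ρ = {p_b : b ∈ B_ρ}` on the set `B_{2ρ}`. -/
def cameronCarrier {G : Type*} [Group G] (A : Set G) (ρ : ℕ) :
    Set (Set (↥(wordBall A (2 * ρ)) × ↥(wordBall A (2 * ρ)))) :=
  {p | ∃ b ∈ wordBall A ρ, p = camP A ρ b}
/-- The length of an element of a free group: the length of the reduced word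
representing it. -/
noncomputable def flen {β : Type*} (w : FreeGroup β) : ℕ := by
  classical exact w.toWord.length
/-- The relators of the universal group `Γ(B_ρ(P))` of the Cameron permutoid, presented on
the generators `p_b` for `b` in the ball of radius `ρ`: `p_{b₁} p_{b₂} = p_{b₃}` whenever
`b₁ b₂ = b₃` in the group. -/
def cameronGroupRels {G : Type*} [Group G] (A : Set G) (ρ : ℕ) :
    Set (FreeGroup ↥(wordBall A ρ)) :=
  {w | ∃ b₁ b₂ b₃ : ↥(wordBall A ρ), (b₁ : G) * (b₂ : G) = (b₃ : G) ∧
    w = FreeGroup.of b₁ * FreeGroup.of b₂ * (FreeGroup.of b₃)⁻¹}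

section Aux
variable {G : Type*} [Group G] {A : Set G}

theorem wordBall_one (A : Set G) (n : ℕ) : (1:G) ∈ wordBall A n :=
  ⟨[], by simp, by simp, rfl⟩
theorem wordBall_mono {m n : ℕ} (h : m ≤ n) : wordBall A m ⊆ wordBall A n := by
  rintro g ⟨l, hl, hla, rfl⟩; exact ⟨l, hl.trans h, hla, rfl⟩
theorem wordBall_mul {m n : ℕ} {g g' : G}
    (hg : g ∈ wordBall A m) (hg' : g' ∈ wordBall A n) : g * g' ∈ wordBall A (m + n) := by
  obtain ⟨l, hl, hla, rfl⟩ := hg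
  obtain ⟨l', hl', hl'a, rfl⟩ := hg'
  refine ⟨l ++ l', by simp; omega, ?_, by simp⟩
  intro a ha
  rcases List.mem_append.1 ha with h | h
  exacts [hla a h, hl'a a h]
theorem wordBall_letter {n : ℕ} (hn : 1 ≤ n) {a : G} (ha : a ∈ A ∨ a⁻¹ ∈ A) :
    a ∈ wordBall A n := ⟨[a], by simpa, by simpa, by simp⟩
theorem wordBall_inv {n : ℕ} {g : G} (hg : g ∈ wordBall A n) : g⁻¹ ∈ wordBall A n := by
  obtain ⟨l, hl, hla, rfl⟩ := hg
  refine ⟨(l.map fun x => x⁻¹).reverse, by simpa, ?_, (List.prod_inv_reverse l).symm⟩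
  intro a ha
  simp only [List.mem_reverse, List.mem_map] at ha
  obtain ⟨x, hx, rfl⟩ := ha
  rcases hla x hx with h | h
  · exact Or.inr (by simpa)
  · exact Or.inl h
theorem wordBall_of_list (l : List G) (hla : ∀ a ∈ l, a ∈ A ∨ a⁻¹ ∈ A) :
    l.prod ∈ wordBall A l.length := ⟨l, le_refl _, hla, rfl⟩

variable {ρ : ℕ}

theorem cameron_rel_mul (b₁ b₂ b₃ : ↥(wordBall A ρ)) (h : (b₁ : G) * (b₂ : G) = (b₃ : G)) :
    (PresentedGroup.of b₁ * PresentedGroup.of b₂ :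
      PresentedGroup (cameronGroupRels A ρ)) = PresentedGroup.of b₃ := by
  have hmem : (FreeGroup.of b₁ * FreeGroup.of b₂ * (FreeGroup.of b₃)⁻¹ :
      FreeGroup ↥(wordBall A ρ)) ∈ cameronGroupRels A ρ := ⟨b₁, b₂, b₃, h, rfl⟩
  have h1 : PresentedGroup.mk (cameronGroupRels A ρ)
      (FreeGroup.of b₁ * FreeGroup.of b₂ * (FreeGroup.of b₃)⁻¹) = 1 :=
    (QuotientGroup.eq_one_iff _).2 (Subgroup.subset_normalClosure hmem)
  rw [map_mul, map_mul, map_inv, mul_inv_eq_one] at h1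
  exact h1

open scoped Classical in
/-- `camOf A ρ a` is `p_a` if `a` is in the ball, `1` otherwise. -/
noncomputable def camOf (A : Set G) (ρ : ℕ) (a : G) :
    PresentedGroup (cameronGroupRels A ρ) :=
  if h : a ∈ wordBall A ρ then PresentedGroup.of ⟨a, h⟩ else 1

theorem camOf_eq {a : G} (h : a ∈ wordBall A ρ) :
    camOf A ρ a = PresentedGroup.of ⟨a, h⟩ := by
  unfold camOf
  exact dif_pos h

theorem camOf_one : camOf A ρ (1 : G) = 1 := by
  have h := wordBall_one A ρ
  have := cameron_rel_mul (A := A) (ρ := ρ) ⟨1, h⟩ ⟨1, h⟩ ⟨1, h⟩ (one_mul 1)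
  rw [camOf_eq h]
  exact mul_eq_left.mp this

theorem camOf_mul {a b : G} (ha : a ∈ wordBall A ρ) (hb : b ∈ wordBall A ρ)
    (hab : a * b ∈ wordBall A ρ) : camOf A ρ (a * b) = camOf A ρ a * camOf A ρ b := by
  rw [camOf_eq ha, camOf_eq hb, camOf_eq hab]
  exact (cameron_rel_mul ⟨a, ha⟩ ⟨b, hb⟩ ⟨a * b, hab⟩ rfl).symm

theorem camOf_inv {a : G} (ha : a ∈ wordBall A ρ) :
    camOf A ρ a⁻¹ = (camOf A ρ a)⁻¹ := by
  have ha' : a⁻¹ ∈ wordBall A ρ := wordBall_inv ha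
  have h1 : camOf A ρ a * camOf A ρ a⁻¹ = 1 := by
    rw [camOf_eq ha, camOf_eq ha',
      cameron_rel_mul ⟨a, ha⟩ ⟨a⁻¹, ha'⟩ ⟨1, wordBall_one A ρ⟩ (mul_inv_cancel a),
      ← camOf_eq (wordBall_one A ρ), camOf_one]
  exact (inv_eq_of_mul_eq_one_right h1).symm

theorem camOf_list (hρ1 : 1 ≤ ρ) :
    ∀ l : List G, (∀ a ∈ l, a ∈ A ∨ a⁻¹ ∈ A) → l.length ≤ ρ →
      (l.map (camOf A ρ)).prod = camOf A ρ l.prod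
  | [], _, _ => by simp [camOf_one]
  | a :: l, hla, hlen => by
    have hmem : ∀ x ∈ l, x ∈ A ∨ x⁻¹ ∈ A := fun x hx => hla x (List.mem_cons_of_mem _ hx)
    have hlen' : l.length ≤ ρ := by simp at hlen; omega
    have ha : a ∈ wordBall A ρ := wordBall_letter hρ1 (hla a (List.mem_cons_self))
    have hl : l.prod ∈ wordBall A ρ :=
      wordBall_mono hlen' (wordBall_of_list l hmem)
    have hal : a * l.prod ∈ wordBall A ρ := by
      have := wordBall_mul (m := 1) (wordBall_letter le_rfl (hla a (List.mem_cons_self)))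
        (wordBall_of_list l hmem)
      exact wordBall_mono (by simp only [List.length_cons] at hlen; omega) this
    rw [List.map_cons, List.prod_cons, List.prod_cons, camOf_mul ha hl hal,
      camOf_list hρ1 l hmem hlen']

end Aux

theorem flen_eq {β : Type*} [DecidableEq β] (w : FreeGroup β) : flen w = w.toWord.length := by
  unfold flen
  congr!

/-- If `P = ⟨A | R⟩` is a finite presentation and `ρ` is an integer greater than half the
length of the longest relator of `R`, then the natural homomorphism `Γ(B_ρ(P)) → |P|`,
`p_b ↦ b`, is an isomorphism. -/
theorem cameronGroup_iso {α : Type*} [Finite α] {rels : Set (FreeGroup α)}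
    (hrels : rels.Finite) (ρ : ℕ) (hρ1 : 1 ≤ ρ) (hρ : ∀ r ∈ rels, flen r < 2 * ρ) :
    ∃ e : PresentedGroup
        (cameronGroupRels (Set.range (PresentedGroup.of : α → PresentedGroup rels)) ρ) ≃*
        PresentedGroup rels,
      ∀ b : ↥(wordBall (Set.range (PresentedGroup.of : α → PresentedGroup rels)) ρ),
        e (PresentedGroup.of b) = (b : PresentedGroup rels) := by
  classical
  set A : Set (PresentedGroup rels) :=
    Set.range (PresentedGroup.of : α → PresentedGroup rels) with hA
  have hofA : ∀ x : α, (PresentedGroup.of x : PresentedGroup rels) ∈ A := fun x => ⟨x, rfl⟩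
  -- the homomorphism Γ → G
  have hφrel : ∀ r ∈ cameronGroupRels A ρ,
      FreeGroup.lift (fun b : ↥(wordBall A ρ) => (b : PresentedGroup rels)) r = 1 := by
    rintro r ⟨b₁, b₂, b₃, h, rfl⟩
    simp only [map_mul, map_inv, FreeGroup.lift_apply_of, h, mul_inv_cancel]
  set φ := PresentedGroup.toGroup hφrel with hφ
  -- the homomorphism G → Γ
  set f : α → PresentedGroup (cameronGroupRels A ρ) :=
    fun x => camOf A ρ (PresentedGroup.of x) with hf
  have hψrel : ∀ r ∈ rels, FreeGroup.lift f r = 1 := by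
    intro r hr
    set L := r.toWord with hLdef
    have hlen : L.length < 2 * ρ := by
      have := hρ r hr
      rwa [flen_eq] at this
    have hred : FreeGroup.mk L = r := FreeGroup.mk_toWord
    set gl : List (PresentedGroup rels) :=
      L.map fun x => cond x.2 (PresentedGroup.of x.1) (PresentedGroup.of x.1)⁻¹ with hgl
    have hglmem : ∀ a ∈ gl, a ∈ A ∨ a⁻¹ ∈ A := by
      intro a ha
      simp only [hgl, List.mem_map] at ha
      obtain ⟨x, hx, rfl⟩ := ha
      cases x.2
      · exact Or.inr (by simpa using hofA x.1)
      · exact Or.inl (by simpa using hofA x.1)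
    have hgllen : gl.length < 2 * ρ := by simpa [hgl] using hlen
    have hglprod : gl.prod = 1 := by
      have h1 : gl.prod
          = FreeGroup.lift (PresentedGroup.of (rels := rels)) (FreeGroup.mk L) := by
        rw [FreeGroup.lift_mk]
      have h2 : FreeGroup.lift (PresentedGroup.of (rels := rels)) r
          = PresentedGroup.mk rels r :=
        (FreeGroup.lift_unique (PresentedGroup.mk rels) (fun _ => rfl)).symm
      rw [h1, hred, h2]
      exact (QuotientGroup.eq_one_iff _).2 (Subgroup.subset_normalClosure hr)
    have hlift : FreeGroup.lift f r = (gl.map (camOf A ρ)).prod := by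
      conv_lhs => rw [← hred]
      rw [FreeGroup.lift_mk, hgl, List.map_map]
      congr 1
      apply List.map_congr_left
      intro x _
      cases hx2 : x.2
      · simp only [Function.comp_apply, hx2, cond_false, hf]
        rw [camOf_inv (wordBall_letter hρ1 (Or.inl (hofA x.1)))]
      · simp only [Function.comp_apply, hx2, cond_true, hf]
    set l₁ := gl.take ρ with hl₁
    set l₂ := gl.drop ρ with hl₂
    have hsplit : gl = l₁ ++ l₂ := (List.take_append_drop ρ gl).symm
    have hlen1 : l₁.length ≤ ρ := by simp [hl₁]
    have hlen2 : l₂.length ≤ ρ := by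
      rw [hl₂, List.length_drop]
      omega
    have hmem1 : ∀ a ∈ l₁, a ∈ A ∨ a⁻¹ ∈ A := fun a ha =>
      hglmem a (by rw [hsplit]; exact List.mem_append_left _ ha)
    have hmem2 : ∀ a ∈ l₂, a ∈ A ∨ a⁻¹ ∈ A := fun a ha =>
      hglmem a (by rw [hsplit]; exact List.mem_append_right _ ha)
    have hp1 : l₁.prod ∈ wordBall A ρ :=
      wordBall_mono hlen1 (wordBall_of_list l₁ hmem1)
    have hprod12 : l₁.prod * l₂.prod = 1 := by
      rw [← List.prod_append, ← hsplit, hglprod]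
    have hinv : l₂.prod = l₁.prod⁻¹ := (inv_eq_of_mul_eq_one_right hprod12).symm
    rw [hlift, hsplit, List.map_append, List.prod_append,
      camOf_list hρ1 l₁ hmem1 hlen1, camOf_list hρ1 l₂ hmem2 hlen2, hinv,
      camOf_inv hp1, mul_inv_cancel]
  set ψ := PresentedGroup.toGroup hψrel with hψ
  have hψof : ∀ x : α, ψ (PresentedGroup.of x) = f x := fun x => PresentedGroup.toGroup.of hψrel
  have hψ_ball : ∀ g ∈ wordBall A ρ, ψ g = camOf A ρ g := by
    rintro g ⟨l, hl, hla, rfl⟩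
    rw [map_list_prod, ← camOf_list hρ1 l hla hl]
    congr 1
    apply List.map_congr_left
    intro a ha
    rcases hla a ha with h | h
    · obtain ⟨x, rfl⟩ := h
      exact hψof x
    · obtain ⟨x, hx⟩ := h
      have hax : a = (PresentedGroup.of x)⁻¹ := by rw [hx, inv_inv]
      rw [hax, map_inv, hψof x]
      show (camOf A ρ (PresentedGroup.of x))⁻¹ = _
      rw [← camOf_inv (wordBall_letter hρ1 (Or.inl (hofA x)))]
  have h₁ : ψ.comp φ = MonoidHom.id _ := by
    apply PresentedGroup.ext
    intro b
    have hb : φ (PresentedGroup.of b) = (b : PresentedGroup rels) :=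
      PresentedGroup.toGroup.of hφrel
    simp only [MonoidHom.comp_apply, MonoidHom.id_apply, hb]
    rw [hψ_ball _ b.2, camOf_eq b.2]
  have h₂ : φ.comp ψ = MonoidHom.id _ := by
    apply PresentedGroup.ext
    intro x
    simp only [MonoidHom.comp_apply, MonoidHom.id_apply, hψof x, hf]
    rw [camOf_eq (wordBall_letter hρ1 (Or.inl (hofA x)))]
    exact PresentedGroup.toGroup.of hφrel
  refine ⟨MonoidHom.toMulEquiv φ ψ h₁ h₂, fun b => ?_⟩
  show φ (PresentedGroup.of b) = (b : PresentedGroup rels)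
  exact PresentedGroup.toGroup.of hφrel
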